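/- Let K be a field, n ≥ 2, and let b_1, …, b_{n-1} ∈ K be nonzero. Suppose w_1, …, w_{n-1} ∈ K are nonzero and satisfy, for each i, the equation w_i + Σ_{j≠i} b_j w_i / w_j − b_i / w_i − Σ_{j≠i} b_i w_j / w_i = 0. Set L = Σ_{i=1}^{n-1} w_i. Then for every i one has (w_i − b_i/w_i)(1 + L) = 0; equivalently (w_i^2 − b_i)(1 + L) = 0. -/

import Mathlib

open Finset

theorem critical_eqs_factor
    {K : Type*} [Field K] (n : ℕ) (hn : 2 ≤ n)
    (b w : Fin (n - 1) → K)
    (hb : ∀ i, b i ≠ 0) (hw : ∀ i, w i ≠ 0)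
    (heq : ∀ i, w i + (∑ j ∈ univ.erase i, b j * w i / w j)
        - b i / w i - (∑ j ∈ univ.erase i, b i * w j / w i) = 0)
    (L : K) (hL : L = ∑ i, w i) :
    ∀ i, (w i - b i / w i) * (1 + L) = 0 ∧ (w i ^ 2 - b i) * (1 + L) = 0 := by
  set S : K := ∑ j, b j / w j with hS
  have key : ∀ i, w i * (1 + S) - (b i / w i) * (1 + L) = 0 := by
    intro i
    have h := heq i
    have h1 : ∑ j ∈ univ.erase i, b j * w i / w j = w i * (S - b i / w i) := by
      rw [hS, ← Finset.sum_erase_eq_sub (mem_univ i), Finset.mul_sum]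
      exact Finset.sum_congr rfl fun j _ => by ring
    have h2 : ∑ j ∈ univ.erase i, b i * w j / w i = (b i / w i) * (L - w i) := by
      rw [hL, ← Finset.sum_erase_eq_sub (mem_univ i), Finset.mul_sum]
      exact Finset.sum_congr rfl fun j _ => by ring
    rw [h1, h2] at h
    linear_combination h
  have hsum : L * (1 + S) - S * (1 + L) = 0 := by
    have h0 : ∑ i, (w i * (1 + S) - (b i / w i) * (1 + L)) = 0 :=
      Finset.sum_eq_zero fun i _ => key i
    calc L * (1 + S) - S * (1 + L)
        = ∑ i, (w i * (1 + S) - (b i / w i) * (1 + L)) := by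
          rw [hL, hS, Finset.sum_mul, Finset.sum_mul, Finset.sum_sub_distrib]
      _ = 0 := h0
  have hLS : L = S := by linear_combination hsum
  intro i
  have h3 : w i * (b i / w i) = b i := by
    rw [mul_div_assoc']; exact mul_div_cancel_left₀ _ (hw i)
  have first : (w i - b i / w i) * (1 + L) = 0 := by
    linear_combination key i + w i * hLS
  exact ⟨first, by linear_combination w i * first + (1 + L) * h3⟩
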